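/- (Hopping pattern of type A2) Let m be a positive odd integer and n a positive integer with n ≥ m. Let I' = {1, 2, …, m−1} and J = {0, 1, …, n−1}. Define f : I' × J → I' × J by f(i, j) = ((2i) mod m, (j − i + ((2i) mod m)) mod n). Then f is a well-defined bijection of I' × J satisfying: (i) for every j ∈ J, if f₂(i₁, j) = f₂(i₂, j) then i₁ = i₂; (ii) f₁(i, j) ≠ i for all (i, j) ∈ I' × J; and (iii) the function g(i, j) = (j − i) mod n is a hopping invariant, i.e. g(f(i, j)) = g(i, j) for all (i, j) ∈ I' × J. -/

import Mathlib

private lemma case_lemma (m i : ℤ) (hm : 0 < m) (h1 : 1 ≤ i) (h2 : i < m) :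
    (2 * i < m ∧ 2 * i % m = 2 * i) ∨ (m ≤ 2 * i ∧ 2 * i % m = 2 * i - m) := by
  by_cases h : 2 * i < m
  · exact Or.inl ⟨h, Int.emod_eq_of_lt (by omega) h⟩
  · refine Or.inr ⟨by omega, ?_⟩
    rw [← Int.sub_emod_right]
    exact Int.emod_eq_of_lt (by omega) (by omega)

/-- Hopping pattern of type A2: with `m` odd positive and `n ≥ m`, the map
`f(i,j) = (2i mod m, (j − i + (2i mod m)) mod n)` is a bijection of
`I' × J = {1,…,m−1} × {0,…,n−1}` satisfying the half-duplex condition, the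
frequency-hopping condition, and admitting the hopping invariant
`g(i,j) = (j − i) mod n`. -/
theorem stmt_4 (m n : ℤ) (hm : 0 < m) (hmodd : Odd m) (hn : 0 < n) (hmn : m ≤ n) :
    Set.BijOn (fun x : ℤ × ℤ => (2 * x.1 % m, (x.2 - x.1 + 2 * x.1 % m) % n))
      {x : ℤ × ℤ | 1 ≤ x.1 ∧ x.1 < m ∧ 0 ≤ x.2 ∧ x.2 < n}
      {x : ℤ × ℤ | 1 ≤ x.1 ∧ x.1 < m ∧ 0 ≤ x.2 ∧ x.2 < n} ∧
    (∀ i₁ i₂ j : ℤ, 1 ≤ i₁ → i₁ < m → 1 ≤ i₂ → i₂ < m → 0 ≤ j → j < n →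
      (j - i₁ + 2 * i₁ % m) % n = (j - i₂ + 2 * i₂ % m) % n → i₁ = i₂) ∧
    (∀ i j : ℤ, 1 ≤ i → i < m → 0 ≤ j → j < n → 2 * i % m ≠ i) ∧
    (∀ i j : ℤ, 1 ≤ i → i < m → 0 ≤ j → j < n →
      ((j - i + 2 * i % m) % n - 2 * i % m) % n = (j - i) % n) := by
  obtain ⟨t, ht⟩ := hmodd
  -- half-duplex condition
  have hd : ∀ i₁ i₂ j : ℤ, 1 ≤ i₁ → i₁ < m → 1 ≤ i₂ → i₂ < m → 0 ≤ j → j < n →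
      (j - i₁ + 2 * i₁ % m) % n = (j - i₂ + 2 * i₂ % m) % n → i₁ = i₂ := by
    intro i₁ i₂ j h1 h2 h3 h4 _ _ h
    have hc₁ := case_lemma m i₁ hm h1 h2
    have hc₂ := case_lemma m i₂ hm h3 h4
    have hdvd : n ∣ (j - i₂ + 2 * i₂ % m) - (j - i₁ + 2 * i₁ % m) := Int.ModEq.dvd h
    obtain ⟨k, hk⟩ := hdvd
    have hk3 : -2 < k ∧ k < 2 := by
      constructor
      · by_contra hle
        have : k ≤ -2 := by omega
        have : n * k ≤ n * (-2) := by
          exact mul_le_mul_of_nonneg_left this (le_of_lt hn)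
        omega
      · by_contra hle
        have : 2 ≤ k := by omega
        have : n * 2 ≤ n * k := mul_le_mul_of_nonneg_left this (le_of_lt hn)
        omega
    have hk4 : k = -1 ∨ k = 0 ∨ k = 1 := by omega
    rcases hk4 with rfl | rfl | rfl <;> omega
  -- frequency hopping condition
  have fh : ∀ i j : ℤ, 1 ≤ i → i < m → 0 ≤ j → j < n → 2 * i % m ≠ i := by
    intro i j h1 h2 _ _
    have hc := case_lemma m i hm h1 h2
    omega
  -- invariant
  have inv : ∀ i j : ℤ, 1 ≤ i → i < m → 0 ≤ j → j < n →
      ((j - i + 2 * i % m) % n - 2 * i % m) % n = (j - i) % n := by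
    intro i j _ _ _ _
    have : ((j - i + 2 * i % m) % n - 2 * i % m) % n
        = ((j - i + 2 * i % m) - 2 * i % m) % n := by
      have h1 : (j - i + 2 * i % m) % n ≡ (j - i + 2 * i % m) [ZMOD n] :=
        Int.emod_emod_of_dvd _ dvd_rfl
      exact h1.sub_right _
    rw [this]
    congr 1
    ring
  -- first component in range
  have hfc : ∀ i : ℤ, 1 ≤ i → i < m → 1 ≤ 2 * i % m ∧ 2 * i % m < m := by
    intro i h1 h2
    have hc := case_lemma m i hm h1 h2
    omega
  have hmapsTo : Set.MapsTo (fun x : ℤ × ℤ => (2 * x.1 % m, (x.2 - x.1 + 2 * x.1 % m) % n))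
      {x : ℤ × ℤ | 1 ≤ x.1 ∧ x.1 < m ∧ 0 ≤ x.2 ∧ x.2 < n}
      {x : ℤ × ℤ | 1 ≤ x.1 ∧ x.1 < m ∧ 0 ≤ x.2 ∧ x.2 < n} := by
    rintro ⟨i, j⟩ ⟨h1, h2, h3, h4⟩
    obtain ⟨h5, h6⟩ := hfc i h1 h2
    exact ⟨h5, h6, Int.emod_nonneg _ (by omega), Int.emod_lt_of_pos _ hn⟩
  have hinj : Set.InjOn (fun x : ℤ × ℤ => (2 * x.1 % m, (x.2 - x.1 + 2 * x.1 % m) % n))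
      {x : ℤ × ℤ | 1 ≤ x.1 ∧ x.1 < m ∧ 0 ≤ x.2 ∧ x.2 < n} := by
    rintro ⟨i₁, j₁⟩ ⟨h1, h2, h3, h4⟩ ⟨i₂, j₂⟩ ⟨h5, h6, h7, h8⟩ heq
    simp only [Prod.mk.injEq] at heq
    obtain ⟨heq1, heq2⟩ := heq
    have hc₁ := case_lemma m i₁ hm h1 h2
    have hc₂ := case_lemma m i₂ hm h5 h6
    have hi : i₁ = i₂ := by omega
    subst hi
    have : (j₁ - i₁ + 2 * i₁ % m) % n = (j₂ - i₁ + 2 * i₁ % m) % n := heq2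
    have hdvd : n ∣ (j₂ - i₁ + 2 * i₁ % m) - (j₁ - i₁ + 2 * i₁ % m) := Int.ModEq.dvd this
    have hdvd2 : n ∣ j₂ - j₁ := by
      have : (j₂ - i₁ + 2 * i₁ % m) - (j₁ - i₁ + 2 * i₁ % m) = j₂ - j₁ := by ring
      rwa [this] at hdvd
    obtain ⟨k, hk⟩ := hdvd2
    have hk3 : k = 0 := by
      by_contra hne
      rcases lt_or_gt_of_ne hne with hlt | hgt
      · have : n * k ≤ n * (-1) := mul_le_mul_of_nonneg_left (by omega) (le_of_lt hn)
        omega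
      · have : n * 1 ≤ n * k := mul_le_mul_of_nonneg_left (by omega) (le_of_lt hn)
        omega
    subst hk3
    simp only [mul_zero] at hk
    have : j₁ = j₂ := by omega
    exact Prod.ext rfl this
  have hfin : Set.Finite {x : ℤ × ℤ | 1 ≤ x.1 ∧ x.1 < m ∧ 0 ≤ x.2 ∧ x.2 < n} := by
    have : {x : ℤ × ℤ | 1 ≤ x.1 ∧ x.1 < m ∧ 0 ≤ x.2 ∧ x.2 < n}
        = Set.Ico 1 m ×ˢ Set.Ico 0 n := by
      ext ⟨a, b⟩
      simp [Set.mem_prod, Set.mem_Ico, and_assoc]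
    rw [this]
    exact (Set.finite_Ico 1 m).prod (Set.finite_Ico 0 n)
  refine ⟨(hfin.injOn_iff_bijOn_of_mapsTo hmapsTo).mp hinj, hd, fh, inv⟩
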